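/- Let ν ∈ (0,1), μ = 1 − ν, δ ∈ ℝ, α > 0, and let (C_N) be a sequence of integers with C_N = νN + δ√N + o(√N). Then lim_{N→∞} ∫₀^{√N} (1 − u/√N)^{N−C_N} · (1 + (μ/ν)·u/√N)^{C_N} · u^{α−1} du = ∫₀^∞ exp(δu/ν − (1−ν)u²/(2ν)) u^{α−1} du. -/

import Mathlib

open Filter Topology MeasureTheory Asymptotics

private lemma aux_sqrt_atTop : Tendsto (fun N : ℕ => Real.sqrt N) atTop atTop := by
  apply tendsto_atTop_atTop.2
  intro b
  refine ⟨⌈(max b 0)^2⌉₊, fun n hn => ?_⟩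
  calc b ≤ max b 0 := le_max_left _ _
    _ = Real.sqrt ((max b 0)^2) := (Real.sqrt_sq (le_max_right _ _)).symm
    _ ≤ Real.sqrt n := Real.sqrt_le_sqrt (by exact_mod_cast (Nat.ceil_le.1 hn))

private lemma aux_log_expand {y : ℝ} (hy : |y| ≤ 1/2) :
    |y + y^2/2 + Real.log (1 - y)| ≤ 2*|y|^3 := by
  have h1 : |y| < 1 := lt_of_le_of_lt hy (by norm_num)
  have h := Real.abs_log_sub_add_sum_range_le h1 2
  simp [Finset.sum_range_succ] at h
  have h2 : |y|^3/(1-|y|) ≤ 2*|y|^3 := by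
    rw [div_le_iff₀ (by linarith)]
    nlinarith [pow_nonneg (abs_nonneg y) 3]
  calc |y + y^2/2 + Real.log (1-y)| = |y/1 + y^2/2 + Real.log (1-y)| := by norm_num
    _ ≤ |y|^3/(1-|y|) := by convert h using 3 <;> norm_num
    _ ≤ 2*|y|^3 := h2

private lemma aux_one_add_le {c t : ℝ} (ht : 0 ≤ t) (htc : t ≤ c) :
    1 + t ≤ Real.exp (t - t^2/(4*(1+c))) := by
  have hc : 0 ≤ c := le_trans ht htc
  set w := Real.sqrt (1+t) with hw
  set v := Real.sqrt (1+c) with hv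
  have hw2 : w^2 = 1+t := Real.sq_sqrt (by linarith)
  have hv2 : v^2 = 1+c := Real.sq_sqrt (by linarith)
  have hw1 : 1 ≤ w := Real.one_le_sqrt.2 (by linarith)
  have hv1 : 1 ≤ v := Real.one_le_sqrt.2 (by linarith)
  have hwv : w ≤ v := Real.sqrt_le_sqrt (by linarith)
  have hlog : Real.log (1+t) ≤ 2*(w-1) := by
    have heq : Real.log (1+t) = 2 * Real.log w := by
      rw [hw, Real.log_sqrt (by linarith)]; ring
    rw [heq]
    have := Real.log_le_sub_one_of_pos (show 0 < w by linarith)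
    linarith
  have key : (w-1)^2 * ((2*v - w - 1) * (2*v + w + 1)) ≥ 0 :=
    mul_nonneg (sq_nonneg _) (mul_nonneg (by linarith) (by linarith))
  have h4 : (0:ℝ) < 4*(1+c) := by linarith
  have hdiv : t^2/(4*(1+c)) ≤ t - 2*(w-1) := by
    rw [div_le_iff₀ h4]
    have ht' : t = w^2 - 1 := by linarith
    have hc' : 1 + c = v^2 := hv2.symm
    rw [ht', hc']
    nlinarith [key]
  have hfin : Real.log (1+t) ≤ t - t^2/(4*(1+c)) := by linarith
  calc 1 + t = Real.exp (Real.log (1+t)) := (Real.exp_log (by linarith)).symm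
    _ ≤ _ := Real.exp_le_exp.2 hfin

set_option maxHeartbeats 1000000 in
/-- Critical regime: convergence of the denominator integral after the substitution
`u → u/√N` to the Gaussian-type integral. -/
theorem critical_denominator_convergence
    (ν μ δ α : ℝ) (hν : ν ∈ Set.Ioo (0:ℝ) 1) (hμ : μ = 1 - ν) (hα : 0 < α)
    (C : ℕ → ℕ)
    (hC : (fun N : ℕ => (C N : ℝ) - ν * N - δ * Real.sqrt N)
        =o[atTop] fun N : ℕ => Real.sqrt N) :
    Tendsto (fun N : ℕ =>
        ∫ u in Set.Ioo (0:ℝ) (Real.sqrt N),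
          (1 - u / Real.sqrt N) ^ (N - C N) *
            (1 + (μ / ν) * u / Real.sqrt N) ^ (C N) * u ^ (α - 1))
      atTop
      (𝓝 (∫ u in Set.Ioi (0:ℝ),
        Real.exp (δ * u / ν - (1 - ν) * u ^ 2 / (2 * ν)) * u ^ (α - 1))) := by
  obtain ⟨hν0, hν1⟩ := hν
  have hμ0 : 0 < μ := by rw [hμ]; linarith
  set c : ℝ := μ / ν with hcdef
  have hc0 : 0 < c := div_pos hμ0 hν0
  have h1c : 1 + c = 1/ν := by rw [hcdef, hμ]; field_simp; ring
  -- the sequence (C N - ν N)/√N tends to δ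
  have hq : Tendsto (fun N : ℕ => ((C N : ℝ) - ν*N)/Real.sqrt N) atTop (𝓝 δ) := by
    have h0 := hC.tendsto_div_nhds_zero
    have h1 := h0.add (tendsto_const_nhds : Tendsto (fun _ : ℕ => δ) atTop (𝓝 δ))
    rw [zero_add] at h1
    apply h1.congr'
    filter_upwards [eventually_ge_atTop 1] with N hN
    have hsN : Real.sqrt N ≠ 0 := by
      refine ne_of_gt (Real.sqrt_pos.2 ?_)
      exact_mod_cast Nat.pos_of_ne_zero (by omega)
    field_simp; ring
  -- the sequence C N / N tends to ν
  have hr : Tendsto (fun N : ℕ => (C N : ℝ)/N) atTop (𝓝 ν) := by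
    have h1 : Tendsto (fun N : ℕ => ((C N : ℝ) - ν*N)/Real.sqrt N / Real.sqrt N)
        atTop (𝓝 0) := hq.div_atTop aux_sqrt_atTop
    have h2 := h1.add (tendsto_const_nhds : Tendsto (fun _ : ℕ => ν) atTop (𝓝 ν))
    rw [zero_add] at h2
    apply h2.congr'
    filter_upwards [eventually_ge_atTop 1] with N hN
    have hNpos : (0:ℝ) < N := by exact_mod_cast Nat.pos_of_ne_zero (by omega)
    have hss : Real.sqrt N * Real.sqrt N = N := Real.mul_self_sqrt (le_of_lt hNpos)
    rw [div_div, hss]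
    field_simp; ring
  -- eventual facts
  have hCleN : ∀ᶠ N : ℕ in atTop, C N ≤ N := by
    filter_upwards [hr.eventually_lt_const hν1, eventually_ge_atTop 1] with N h1 h2
    have hNpos : (0:ℝ) < N := by exact_mod_cast Nat.pos_of_ne_zero (by omega)
    have : (C N : ℝ) < N := by
      have := (div_lt_one hNpos).1 h1
      linarith
    exact_mod_cast le_of_lt this
  have hrhalf : ∀ᶠ N : ℕ in atTop, ν/2 ≤ (C N : ℝ)/N :=
    (hr.eventually_const_lt (by linarith)).mono fun N h => le_of_lt h
  have hqbd : ∀ᶠ N : ℕ in atTop, |((C N : ℝ) - ν*N)/Real.sqrt N| ≤ |δ| + 1 := by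
    have habs : Tendsto (fun N : ℕ => |((C N : ℝ) - ν*N)/Real.sqrt N|) atTop (𝓝 |δ|) :=
      hq.abs
    exact (habs.eventually_lt_const (by linarith)).mono fun N h => le_of_lt h
  -- constants for the dominating function
  set K : ℝ := (|δ|+1)/ν with hKdef
  set K2 : ℝ := ν*c^2/(8*(1+c)) with hK2def
  have hK2pos : 0 < K2 := by
    apply div_pos (by positivity) (by nlinarith)
  have hKpos : 0 < K := by positivity
  clear_value c K K2
  -- the functions
  set F : ℕ → ℝ → ℝ := fun N => (Set.Ioo (0:ℝ) (Real.sqrt N)).indicator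
      (fun u => (1 - u/Real.sqrt N)^(N - C N) * (1 + c*u/Real.sqrt N)^(C N) * u^(α-1))
      with hFdef
  set f : ℝ → ℝ := fun u => Real.exp (δ*u/ν - (1-ν)*u^2/(2*ν)) * u^(α-1) with hfdef
  set bound : ℝ → ℝ := fun u => Real.exp (K*u - K2*u^2) * u^(α-1) with hbdef
  -- measurability
  have hFmeas : ∀ N : ℕ, AEStronglyMeasurable (F N) (volume.restrict (Set.Ioi (0:ℝ))) := by
    intro N
    apply Measurable.aestronglyMeasurable
    apply Measurable.indicator _ measurableSet_Ioo
    exact (((measurable_const.sub (measurable_id.div_const _)).pow_const _).mul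
      ((measurable_const.add ((measurable_id.const_mul c).div_const _)).pow_const _)).mul
      (measurable_id.pow_const _)
  -- dominating bound
  have h_bound : ∀ᶠ N : ℕ in atTop,
      ∀ᵐ u ∂(volume.restrict (Set.Ioi (0:ℝ))), ‖F N u‖ ≤ bound u := by
    filter_upwards [hCleN, hrhalf, hqbd, eventually_ge_atTop 1] with N hCle hhalf hqb hN1
    rw [ae_restrict_iff' measurableSet_Ioi]
    apply Eventually.of_forall
    intro u hu
    have hu0 : (0:ℝ) < u := hu
    have hbnd0 : 0 ≤ bound u := mul_nonneg (Real.exp_nonneg _) (Real.rpow_nonneg hu0.le _)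
    by_cases hmem : u ∈ Set.Ioo (0:ℝ) (Real.sqrt N)
    · have hNpos : (0:ℝ) < N := by exact_mod_cast Nat.pos_of_ne_zero (by omega)
      set s := Real.sqrt N with hsdef
      have hs0 : 0 < s := Real.sqrt_pos.2 hNpos
      have hs2 : s^2 = N := Real.sq_sqrt hNpos.le
      have hu0' : 0 < u := hmem.1
      have hus : u < s := hmem.2
      have hx1 : u/s < 1 := (div_lt_one hs0).2 hus
      have hx0 : 0 < u/s := div_pos hu0 hs0
      have hcast : ((N - C N : ℕ):ℝ) = (N:ℝ) - C N := by
        rw [Nat.cast_sub hCle]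
      -- bound on first factor
      have hb1 : (1 - u/s)^(N - C N) ≤ Real.exp (-(((N:ℝ) - C N) * (u/s))) := by
        have h1 : 1 - u/s ≤ Real.exp (-(u/s)) := by
          have := Real.add_one_le_exp (-(u/s)); linarith
        calc (1 - u/s)^(N - C N) ≤ (Real.exp (-(u/s)))^(N - C N) :=
              pow_le_pow_left₀ (by linarith) h1 _
          _ = Real.exp (-(((N:ℝ) - C N) * (u/s))) := by
              rw [← Real.exp_nat_mul, hcast]; ring_nf
      -- bound on second factor
      have hb2 : (1 + c*u/s)^(C N)
          ≤ Real.exp ((C N:ℝ) * (c*(u/s) - (c*(u/s))^2/(4*(1+c)))) := by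
        have ht0 : (0:ℝ) ≤ c*(u/s) := by positivity
        have htc : c*(u/s) ≤ c := by nlinarith
        have h2 := aux_one_add_le ht0 htc
        calc (1 + c*u/s)^(C N) = (1 + c*(u/s))^(C N) := by rw [mul_div_assoc]
          _ ≤ (Real.exp (c*(u/s) - (c*(u/s))^2/(4*(1+c))))^(C N) :=
              pow_le_pow_left₀ (by positivity) h2 _
          _ = Real.exp ((C N:ℝ) * (c*(u/s) - (c*(u/s))^2/(4*(1+c)))) := by
              rw [← Real.exp_nat_mul]
      -- the exponent estimate
      have hlin : -(((N:ℝ) - C N) * (u/s)) + (C N:ℝ)*(c*(u/s)) ≤ K*u := by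
        have hc' : c = 1/ν - 1 := by linarith [h1c]
        have e1 : -(((N:ℝ) - C N) * (u/s)) + (C N:ℝ)*(c*(u/s))
            = (u/ν)*((((C N:ℝ)) - ν*N)/s) := by
          rw [hc']
          field_simp [hν0.ne', hs0.ne']
          ring
        rw [e1]
        have hle : (((C N:ℝ)) - ν*N)/s ≤ |δ| + 1 := le_trans (le_abs_self _) hqb
        calc (u/ν)*((((C N:ℝ)) - ν*N)/s) ≤ (u/ν)*(|δ|+1) :=
              mul_le_mul_of_nonneg_left hle (by positivity)
          _ = K*u := by rw [hKdef]; ring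
      have hquad : K2*u^2 ≤ (C N:ℝ)*((c*(u/s))^2/(4*(1+c))) := by
        have e : (C N:ℝ)*((c*(u/s))^2/(4*(1+c)))
            = ((C N:ℝ)/N)*(c^2/(4*(1+c)))*u^2 := by
          rw [mul_pow, div_pow, ← hs2]
          field_simp [hs0.ne']
        rw [e]
        have h1 : (ν/2)*(c^2/(4*(1+c)))*u^2 ≤ ((C N:ℝ)/N)*(c^2/(4*(1+c)))*u^2 := by
          apply mul_le_mul_of_nonneg_right _ (sq_nonneg u)
          exact mul_le_mul_of_nonneg_right hhalf (by positivity)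
        have h1cne : (1:ℝ) + c ≠ 0 := by positivity
        have h2 : K2 = (ν/2)*(c^2/(4*(1+c))) := by
          rw [hK2def]; field_simp [hν0.ne', hμ0.ne']; ring
        nlinarith [h1]
      have hexp : -(((N:ℝ) - C N) * (u/s)) + (C N:ℝ)*(c*(u/s) - (c*(u/s))^2/(4*(1+c)))
          ≤ K*u - K2*u^2 := by nlinarith [hlin, hquad]
      -- combine
      have hF1 : F N u = (1 - u/s)^(N - C N) * (1 + c*u/s)^(C N) * u^(α-1) :=
        Set.indicator_of_mem hmem _
      have hFnn : 0 ≤ F N u := by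
        rw [hF1]
        have : (0:ℝ) ≤ 1 - u/s := by linarith
        positivity
      rw [Real.norm_eq_abs, abs_of_nonneg hFnn, hF1]
      calc (1 - u/s)^(N - C N) * (1 + c*u/s)^(C N) * u^(α-1)
          ≤ (Real.exp (-(((N:ℝ) - C N) * (u/s)))
              * Real.exp ((C N:ℝ) * (c*(u/s) - (c*(u/s))^2/(4*(1+c))))) * u^(α-1) := by
            apply mul_le_mul_of_nonneg_right _ (Real.rpow_nonneg hu0.le _)
            apply mul_le_mul hb1 hb2 (by positivity) (Real.exp_nonneg _)
        _ = Real.exp (-(((N:ℝ) - C N) * (u/s))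
              + (C N:ℝ) * (c*(u/s) - (c*(u/s))^2/(4*(1+c)))) * u^(α-1) := by
            rw [← Real.exp_add]
        _ ≤ Real.exp (K*u - K2*u^2) * u^(α-1) := by
            apply mul_le_mul_of_nonneg_right (Real.exp_le_exp.2 _) (Real.rpow_nonneg hu0.le _)
            calc -(((N:ℝ) - C N) * (u/s)) + (C N:ℝ) * (c*(u/s) - (c*(u/s))^2/(4*(1+c)))
                = -(((N:ℝ) - C N) * (u/s)) + (C N:ℝ)*(c*(u/s) - (c*(u/s))^2/(4*(1+c))) := by ring
              _ ≤ K*u - K2*u^2 := hexp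
        _ = bound u := rfl
    · have hF0 : F N u = 0 := Set.indicator_of_notMem hmem _
      rw [hF0]
      simpa using hbnd0
  -- integrability of the bound
  have h_int : Integrable bound (volume.restrict (Set.Ioi (0:ℝ))) := by
    set M : ℝ := K^2/(2*K2) with hMdef
    have hMrel : M*(2*K2) = K^2 := by
      rw [hMdef]; field_simp
    have hg : Integrable (fun u : ℝ => Real.exp M * (u^(α-1) * Real.exp (-(K2/2)*u^2)))
        (volume.restrict (Set.Ioi (0:ℝ))) :=
      ((integrable_rpow_mul_exp_neg_mul_sq (by positivity) (by linarith)).restrict).const_mul _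
    apply Integrable.mono' hg
    · apply Measurable.aestronglyMeasurable
      exact (Real.measurable_exp.comp ((measurable_id.const_mul K).sub
        ((measurable_id.pow_const 2).const_mul K2))).mul (measurable_id.pow_const _)
    · rw [ae_restrict_iff' measurableSet_Ioi]
      apply Eventually.of_forall
      intro u hu
      have hu0 : (0:ℝ) < u := hu
      have hb0 : 0 ≤ bound u := mul_nonneg (Real.exp_nonneg _) (Real.rpow_nonneg hu0.le _)
      rw [Real.norm_eq_abs, abs_of_nonneg hb0]
      have hexp : Real.exp (K*u - K2*u^2) ≤ Real.exp M * Real.exp (-(K2/2)*u^2) := by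
        rw [← Real.exp_add]
        apply Real.exp_le_exp.2
        nlinarith [sq_nonneg (K2*u - K), hK2pos]
      calc bound u = Real.exp (K*u - K2*u^2) * u^(α-1) := rfl
        _ ≤ (Real.exp M * Real.exp (-(K2/2)*u^2)) * u^(α-1) :=
            mul_le_mul_of_nonneg_right hexp (Real.rpow_nonneg hu0.le _)
        _ = Real.exp M * (u^(α-1) * Real.exp (-(K2/2)*u^2)) := by ring
  -- pointwise limit
  have h_lim : ∀ᵐ u ∂(volume.restrict (Set.Ioi (0:ℝ))),
      Tendsto (fun N : ℕ => F N u) atTop (𝓝 (f u)) := by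
    rw [ae_restrict_iff' measurableSet_Ioi]
    apply Eventually.of_forall
    intro u hu
    have hu0 : (0:ℝ) < u := hu
    -- the log of the product
    set g : ℕ → ℝ := fun N => ((N - C N : ℕ):ℝ) * Real.log (1 - u/Real.sqrt N)
        + (C N:ℝ) * Real.log (1 + c*(u/Real.sqrt N)) with hgdef
    -- eventually F N u is exp (g N) * u^(α-1)
    have hev : (fun N : ℕ => F N u) =ᶠ[atTop] (fun N => Real.exp (g N) * u^(α-1)) := by
      filter_upwards [aux_sqrt_atTop.eventually_gt_atTop u, eventually_ge_atTop 1]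
        with N hsu hN1
      have hs0 : 0 < Real.sqrt N := lt_trans hu0 hsu
      have h1 : 0 < 1 - u/Real.sqrt N := by
        have := (div_lt_one hs0).2 hsu; linarith
      have h2 : 0 < 1 + c*(u/Real.sqrt N) := by positivity
      have hF1 : F N u = (1 - u/Real.sqrt N)^(N - C N)
          * (1 + c*u/Real.sqrt N)^(C N) * u^(α-1) :=
        Set.indicator_of_mem (Set.mem_Ioo.mpr ⟨hu0, hsu⟩) _
      rw [hF1, hgdef]
      congr 1
      rw [Real.exp_add, Real.exp_nat_mul, Real.exp_nat_mul, Real.exp_log h1,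
        Real.exp_log h2, mul_div_assoc]
    -- the limit of g
    have hgoal : Tendsto g atTop (𝓝 (δ*u/ν - (1-ν)*u^2/(2*ν))) := by
      set A : ℕ → ℝ := fun N => (((C N:ℝ) - ν*N)/Real.sqrt N) * (u/ν) with hAdef
      set B : ℕ → ℝ := fun N => -(u^2/2)*((1 - (C N:ℝ)/N) + c^2*((C N:ℝ)/N)) with hBdef
      have hA : Tendsto A atTop (𝓝 (δ*(u/ν))) := hq.mul_const _
      have hB : Tendsto B atTop (𝓝 (-(u^2/2)*((1-ν) + c^2*ν))) := by
        exact ((tendsto_const_nhds.sub hr).add (hr.const_mul (c^2))).const_mul _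
      have hE : Tendsto (fun N => g N - A N - B N) atTop (𝓝 0) := by
        have hgz : Tendsto (fun N : ℕ => 2*(1+c^3)*u^3*(1/Real.sqrt N)) atTop (𝓝 0) := by
          have h0 : Tendsto (fun N : ℕ => 1/Real.sqrt N) atTop (𝓝 0) := by
            simpa [Function.comp_def] using tendsto_inv_atTop_zero.comp aux_sqrt_atTop
          have := h0.const_mul (2*(1+c^3)*u^3)
          simpa [mul_assoc] using this
        apply squeeze_zero_norm' ?_ hgz
        · filter_upwards [aux_sqrt_atTop.eventually_ge_atTop (2*u),
            aux_sqrt_atTop.eventually_ge_atTop (2*c*u), hCleN, eventually_ge_atTop 1]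
            with N h2u h2cu hCle hN1
          have hNpos : (0:ℝ) < N := by exact_mod_cast Nat.pos_of_ne_zero (by omega)
          set sq := Real.sqrt N with hsqdef
          have hs0 : 0 < sq := Real.sqrt_pos.2 hNpos
          have hss : sq*sq = (N:ℝ) := Real.mul_self_sqrt hNpos.le
          set x := u/sq with hxdef
          have hx0 : 0 < x := div_pos hu0 hs0
          have hxh : x ≤ 1/2 := by
            rw [hxdef, div_le_div_iff₀ hs0 (by norm_num)]
            linarith
          have hcxh : c*x ≤ 1/2 := by
            rw [hxdef, mul_div_assoc']
            rw [div_le_div_iff₀ hs0 (by norm_num)]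
            linarith
          have hcast : ((N - C N : ℕ):ℝ) = (N:ℝ) - C N := Nat.cast_sub hCle
          have he1 := aux_log_expand (y := x) (by rw [abs_of_pos hx0]; exact hxh)
          have he2 := aux_log_expand (y := -(c*x)) (by
            rw [abs_neg, abs_of_pos (by positivity)]; exact hcxh)
          rw [abs_of_pos hx0] at he1
          rw [abs_neg, abs_of_pos (show (0:ℝ) < c*x by positivity)] at he2
          have he2' : |(c*x)^2/2 - c*x + Real.log (1 + c*x)| ≤ 2*(c*x)^3 := by
            have : (1:ℝ) - -(c*x) = 1 + c*x := by ring
            rw [this] at he2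
            convert he2 using 2
            ring
          -- the algebraic identity
          have hid : g N - A N - B N
              = ((N:ℝ) - C N) * (Real.log (1 - x) + (x + x^2/2))
              + (C N:ℝ) * (Real.log (1 + c*x) + ((c*x)^2/2 - c*x)) := by
            simp only [hgdef, hAdef, hBdef]
            rw [hcast]
            simp only [← hsqdef, ← hxdef]
            have hc' : c = 1/ν - 1 := by linarith [h1c]
            rw [hc']
            rw [hxdef, ← hss]
            field_simp [hν0.ne', hs0.ne']
            ring
          rw [Real.norm_eq_abs, hid]
          have hb1 : |((N:ℝ) - C N) * (Real.log (1 - x) + (x + x^2/2))| ≤ (N:ℝ) * (2*x^3) := by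
            rw [abs_mul]
            apply mul_le_mul
            · rw [abs_of_nonneg (by
                have : (C N:ℝ) ≤ N := by exact_mod_cast hCle
                linarith)]
              have : (C N:ℝ) ≥ 0 := by positivity
              linarith
            · have : Real.log (1 - x) + (x + x^2/2) = x + x^2/2 + Real.log (1-x) := by ring
              rw [this]; exact he1
            · exact abs_nonneg _
            · positivity
          have hb2 : |(C N:ℝ) * (Real.log (1 + c*x) + ((c*x)^2/2 - c*x))| ≤ (N:ℝ) * (2*(c*x)^3) := by
            rw [abs_mul]
            apply mul_le_mul
            · rw [abs_of_nonneg (by positivity)]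
              exact_mod_cast hCle
            · have : Real.log (1 + c*x) + ((c*x)^2/2 - c*x)
                  = (c*x)^2/2 - c*x + Real.log (1 + c*x) := by ring
              rw [this]; exact he2'
            · exact abs_nonneg _
            · positivity
          have hNx3 : (N:ℝ) * x^3 = u^3 * (1/sq) := by
            rw [hxdef, ← hss]
            field_simp
          calc |((N:ℝ) - C N) * (Real.log (1 - x) + (x + x^2/2))
                + (C N:ℝ) * (Real.log (1 + c*x) + ((c*x)^2/2 - c*x))|
              ≤ (N:ℝ) * (2*x^3) + (N:ℝ) * (2*(c*x)^3) := le_trans (abs_add_le _ _) (add_le_add hb1 hb2)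
            _ = 2*(1+c^3) * ((N:ℝ) * x^3) := by ring
            _ = 2*(1+c^3)*u^3*(1/sq) := by rw [hNx3]; ring
      have hsum : Tendsto (fun N => (g N - A N - B N) + A N + B N) atTop
          (𝓝 (0 + δ*(u/ν) + (-(u^2/2)*((1-ν) + c^2*ν)))) := (hE.add hA).add hB
      have hval : 0 + δ*(u/ν) + (-(u^2/2)*((1-ν) + c^2*ν)) = δ*u/ν - (1-ν)*u^2/(2*ν) := by
        have hc' : c = 1/ν - 1 := by linarith [h1c]
        rw [hc']
        field_simp
        ring
      rw [hval] at hsum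
      exact hsum.congr (fun N => by ring)
    -- conclude
    have hfin : Tendsto (fun N : ℕ => Real.exp (g N) * u^(α-1)) atTop (𝓝 (f u)) := by
      have : Tendsto (fun N : ℕ => Real.exp (g N)) atTop
          (𝓝 (Real.exp (δ*u/ν - (1-ν)*u^2/(2*ν)))) :=
        (Real.continuous_exp.tendsto _).comp hgoal
      simpa [hfdef] using this.mul_const (u^(α-1))
    exact hfin.congr' hev.symm
  have hdct := MeasureTheory.tendsto_integral_filter_of_dominated_convergence
    bound (Eventually.of_forall hFmeas) h_bound h_int h_lim
  apply hdct.congr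
  intro N
  rw [hFdef]
  rw [MeasureTheory.setIntegral_indicator measurableSet_Ioo,
    Set.inter_eq_self_of_subset_right Set.Ioo_subset_Ioi_self]
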